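/- The vector field X is tangent to the Brieskorn variety and preserves both H_ε and Δ_ε: for every z ∈ ℂ^{n+1}, the real directional derivative at z in the direction X(z) of each of the three functions f(z) = z₀² + z₁² − 2i·∑_{j=1}^m z_{2j}z_{2j+1}, z ↦ ∑_{k=0}^n |z_k|², and Δ_ε vanishes. -/

import Mathlib

open Complex

/-- The index `2(j+1)` in `Fin (2m+2)`, for `j : Fin m`. -/
def idxA (m : ℕ) (j : Fin m) : Fin (2 * m + 2) := ⟨2 * j.val + 2, by have := j.isLt; omega⟩

/-- The index `2(j+1)+1` in `Fin (2m+2)`, for `j : Fin m`. -/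
def idxB (m : ℕ) (j : Fin m) : Fin (2 * m + 2) := ⟨2 * j.val + 3, by have := j.isLt; omega⟩

/-- `Δ_ε(z) = ∑_{j=1}^m ε_j(|z_{2j}|² − |z_{2j+1}|²)`. -/
noncomputable def DeltaEps (m : ℕ) (ε : Fin m → ℝ) (z : Fin (2 * m + 2) → ℂ) : ℝ :=
  ∑ j : Fin m, ε j * (‖z (idxA m j)‖ ^ 2 - ‖z (idxB m j)‖ ^ 2)

/-- The vector field `X` on `ℂ^{n+1}` (`n = 2m+1`): `X(z)₀ = X(z)₁ = 0`,
`X(z)_{2j} = i·ε_j·z_{2j}`, `X(z)_{2j+1} = −i·ε_j·z_{2j+1}`. -/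
noncomputable def Xvf (m : ℕ) (ε : Fin m → ℝ) (z : Fin (2 * m + 2) → ℂ) :
    Fin (2 * m + 2) → ℂ := fun k =>
  if h : k.val ≤ 1 then 0
  else if k.val % 2 = 0 then
    Complex.I * ((ε ⟨k.val / 2 - 1, by have := k.isLt; omega⟩ : ℝ) : ℂ) * z k
  else
    -(Complex.I * ((ε ⟨k.val / 2 - 1, by have := k.isLt; omega⟩ : ℝ) : ℂ) * z k)

lemma inner_I_smul (w : ℂ) (r : ℝ) : (inner ℝ w (Complex.I * (r:ℂ) * w) : ℝ) = 0 := by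
  simp [RCLike.inner_apply, Complex.ext_iff, mul_comm]
  ring_nf

lemma Xvf_zero' (m : ℕ) (ε : Fin m → ℝ) (z : Fin (2 * m + 2) → ℂ) (h : (0:ℕ) < 2*m+2) :
    Xvf m ε z ⟨0, h⟩ = 0 := by simp [Xvf]

lemma Xvf_one' (m : ℕ) (ε : Fin m → ℝ) (z : Fin (2 * m + 2) → ℂ) (h : (1:ℕ) < 2*m+2) :
    Xvf m ε z ⟨1, h⟩ = 0 := by simp [Xvf]

lemma Xvf_idxA (m : ℕ) (ε : Fin m → ℝ) (z : Fin (2 * m + 2) → ℂ) (j : Fin m) :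
    Xvf m ε z (idxA m j) = Complex.I * ((ε j : ℝ) : ℂ) * z (idxA m j) := by
  have h1 : ¬ ((idxA m j).val ≤ 1) := by simp [idxA]
  have h2 : (idxA m j).val % 2 = 0 := by
    show (2 * j.val + 2) % 2 = 0; omega
  have hj : (⟨(idxA m j).val / 2 - 1, by have := (idxA m j).isLt; omega⟩ : Fin m) = j := by
    apply Fin.ext
    show (2 * j.val + 2) / 2 - 1 = j.val
    omega
  rw [Xvf, dif_neg h1, if_pos h2, hj]

lemma Xvf_idxB (m : ℕ) (ε : Fin m → ℝ) (z : Fin (2 * m + 2) → ℂ) (j : Fin m) :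
    Xvf m ε z (idxB m j) = -(Complex.I * ((ε j : ℝ) : ℂ) * z (idxB m j)) := by
  have h1 : ¬ ((idxB m j).val ≤ 1) := by simp [idxB]
  have h2 : ¬ ((idxB m j).val % 2 = 0) := by
    show ¬ (2 * j.val + 3) % 2 = 0; omega
  have hj : (⟨(idxB m j).val / 2 - 1, by have := (idxB m j).isLt; omega⟩ : Fin m) = j := by
    apply Fin.ext
    show (2 * j.val + 3) / 2 - 1 = j.val
    omega
  rw [Xvf, dif_neg h1, if_neg h2, hj]

lemma inner_X (m : ℕ) (ε : Fin m → ℝ) (z : Fin (2 * m + 2) → ℂ) (k : Fin (2 * m + 2)) :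
    (inner ℝ (z k) (Xvf m ε z k) : ℝ) = 0 := by
  rw [Xvf]
  split_ifs with h1 h2
  · simp
  · exact inner_I_smul _ _
  · rw [inner_neg_right, inner_I_smul]; simp

/-- The vector field `X` is tangent to the Brieskorn variety and preserves `H_ε` and `Δ_ε`:
the real directional derivative at `z` in the direction `X(z)` of each of
`f(z) = z₀² + z₁² − 2i·∑_j z_{2j}z_{2j+1}`, of `z ↦ ∑_k |z_k|²`, and of `Δ_ε` vanishes. -/
theorem Xvf_tangent_and_preserves (m : ℕ) (hm : 1 ≤ m) (ε : Fin m → ℝ)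
    (z : Fin (2 * m + 2) → ℂ) :
    fderiv ℝ (fun y : Fin (2 * m + 2) → ℂ =>
        y ⟨0, by omega⟩ ^ 2 + y ⟨1, by omega⟩ ^ 2
          - 2 * Complex.I * ∑ j : Fin m, y (idxA m j) * y (idxB m j)) z (Xvf m ε z) = 0 ∧
    fderiv ℝ (fun y : Fin (2 * m + 2) → ℂ => ∑ k, ‖y k‖ ^ 2) z (Xvf m ε z) = 0 ∧
    fderiv ℝ (DeltaEps m ε) z (Xvf m ε z) = 0 := by
  have hE : ∀ k : Fin (2 * m + 2), HasFDerivAt (fun y : Fin (2 * m + 2) → ℂ => y k)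
      (ContinuousLinearMap.proj (R := ℝ) (φ := fun _ : Fin (2 * m + 2) => ℂ) k) z :=
    fun k => by exact (ContinuousLinearMap.proj (R := ℝ) (φ := fun _ : Fin (2 * m + 2) => ℂ) k).hasFDerivAt
  refine ⟨?_, ?_, ?_⟩
  · have h1 : HasFDerivAt (fun y : Fin (2 * m + 2) → ℂ =>
        y ⟨0, by omega⟩ * y ⟨0, by omega⟩ + y ⟨1, by omega⟩ * y ⟨1, by omega⟩
          - 2 * Complex.I * ∑ j : Fin m, y (idxA m j) * y (idxB m j)) _ z :=
      (((hE _).mul (hE _)).add ((hE _).mul (hE _))).sub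
        ((HasFDerivAt.fun_sum (fun j _ => (hE (idxA m j)).mul (hE (idxB m j)))).const_mul
          (2 * Complex.I))
    have heq : (fun y : Fin (2 * m + 2) → ℂ =>
        y ⟨0, by omega⟩ ^ 2 + y ⟨1, by omega⟩ ^ 2
          - 2 * Complex.I * ∑ j : Fin m, y (idxA m j) * y (idxB m j)) =
        (fun y : Fin (2 * m + 2) → ℂ =>
        y ⟨0, by omega⟩ * y ⟨0, by omega⟩ + y ⟨1, by omega⟩ * y ⟨1, by omega⟩
          - 2 * Complex.I * ∑ j : Fin m, y (idxA m j) * y (idxB m j)) := by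
      funext y; rw [sq, sq]
    rw [heq, h1.fderiv]
    simp only [ContinuousLinearMap.sub_apply, ContinuousLinearMap.add_apply,
      ContinuousLinearMap.smul_apply, ContinuousLinearMap.proj_apply,
      ContinuousLinearMap.coe_sum', Finset.sum_apply, smul_eq_mul,
      Xvf_zero', Xvf_one', Xvf_idxA, Xvf_idxB]
    rw [Finset.sum_eq_zero (fun j _ => by ring)]
    ring
  · have h2 : HasFDerivAt (fun y : Fin (2 * m + 2) → ℂ => ∑ k, ‖y k‖ ^ 2)
        (∑ k, (2:ℕ) • ((innerSL ℝ (z k)).comp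
          (ContinuousLinearMap.proj (R := ℝ) (φ := fun _ : Fin (2 * m + 2) => ℂ) k))) z :=
      HasFDerivAt.fun_sum (fun k _ => (hE k).norm_sq)
    have heq : (fun y : Fin (2 * m + 2) → ℂ => ∑ k, ‖y k‖ ^ 2) =
        (fun y : Fin (2 * m + 2) → ℂ => ∑ k, ‖y k‖ ^ 2) := by
      funext y; rfl
    rw [heq, h2.fderiv]
    simp only [ContinuousLinearMap.coe_sum', Finset.sum_apply,
      ContinuousLinearMap.smul_apply, ContinuousLinearMap.comp_apply,
      ContinuousLinearMap.proj_apply, innerSL_apply_apply]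
    simp only [inner_X, smul_zero, Finset.sum_const_zero]
  · have h3 : HasFDerivAt (fun y : Fin (2 * m + 2) → ℂ =>
        ∑ j : Fin m, ε j * (‖y (idxA m j)‖ ^ 2 - ‖y (idxB m j)‖ ^ 2)) _ z :=
      HasFDerivAt.fun_sum (fun j _ =>
        (((hE (idxA m j)).norm_sq.sub (hE (idxB m j)).norm_sq).const_mul (ε j)))
    have heq : DeltaEps m ε = (fun y : Fin (2 * m + 2) → ℂ =>
        ∑ j : Fin m, ε j * (‖y (idxA m j)‖ ^ 2 - ‖y (idxB m j)‖ ^ 2)) := by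
      funext y; unfold DeltaEps; rfl
    rw [heq, h3.fderiv]
    simp only [ContinuousLinearMap.coe_sum', Finset.sum_apply,
      ContinuousLinearMap.smul_apply, ContinuousLinearMap.sub_apply,
      ContinuousLinearMap.comp_apply, ContinuousLinearMap.proj_apply, innerSL_apply_apply]
    simp only [inner_X, smul_zero, sub_zero, zero_sub, neg_zero, smul_eq_mul, mul_zero,
      Finset.sum_const_zero]
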